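/- (Lemma 4 of the paper.) In the stochastic SMBA setting described below, let β ∈ (0,1), let x ∈ Y, let g ∈ ℝⁿ with ‖g‖ ≤ B_f for some B_f ≥ 0, let α ≥ 0, and set v = Π_Y(x − α·g) and v̄ = Π_{X*}(v). Then ∫_Ω dist²(x⁺(ξ), X*) dP(ξ) ≤ ‖v − v̄‖² − (β(1 − β)/(c·𝓑²))·dist²(x, X) + (2β(1 − β)/(c·𝓑²))·α²·B_f². -/

import Mathlib

open Metric MeasureTheory

/-- The center of the ball associated with the quadratic upper approximation
of `h` at `v` with parameter `L`: `c_v = v - (1/L) ∇h(v)`. -/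
noncomputable def ballCenter {n : ℕ} (h : EuclideanSpace ℝ (Fin n) → ℝ) (L : ℝ)
    (v : EuclideanSpace ℝ (Fin n)) : EuclideanSpace ℝ (Fin n) :=
  v - (1 / L) • gradient h v

/-- The radius term `R_v = ‖∇h(v)‖²/L² - 2 h(v)/L`. -/
noncomputable def ballRadius {n : ℕ} (h : EuclideanSpace ℝ (Fin n) → ℝ) (L : ℝ)
    (v : EuclideanSpace ℝ (Fin n)) : ℝ :=
  ‖gradient h v‖ ^ 2 / L ^ 2 - 2 * h v / L

/-- The adaptive parameter `p_v = ((h(v))₊ L) / (1 - √((R_v)₊)/‖v - c_v‖)`,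
where division by zero is interpreted as zero (Lean's convention). -/
noncomputable def adaptP {n : ℕ} (h : EuclideanSpace ℝ (Fin n) → ℝ) (L : ℝ)
    (v : EuclideanSpace ℝ (Fin n)) : ℝ :=
  max (h v) 0 * L /
    (1 - Real.sqrt (max (ballRadius h L v) 0) / ‖v - ballCenter h L v‖)

local notation "⟪" x ", " y "⟫_ℝ" => @inner ℝ _ _ x y

section Aux
variable {n : ℕ}

lemma inner_gradient_eq (f : EuclideanSpace ℝ (Fin n) → ℝ) (x y : EuclideanSpace ℝ (Fin n)) :
    ⟪gradient f x, y⟫_ℝ = fderiv ℝ f x y := by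
  rw [gradient]
  exact InnerProductSpace.toDual_symm_apply

lemma convex_grad_ineq {f : EuclideanSpace ℝ (Fin n) → ℝ}
    (hc : ConvexOn ℝ Set.univ f) (hd : Differentiable ℝ f)
    (v u : EuclideanSpace ℝ (Fin n)) :
    f v + ⟪gradient f v, u - v⟫_ℝ ≤ f u := by
  have hφc : ConvexOn ℝ Set.univ (fun t : ℝ => f (t • (u - v) + v)) := by
    have h2 := hc.comp_affineMap (AffineMap.lineMap v u : ℝ →ᵃ[ℝ] EuclideanSpace ℝ (Fin n))
    simp only [Set.preimage_univ] at h2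
    have he : (f ∘ (AffineMap.lineMap v u : ℝ →ᵃ[ℝ] EuclideanSpace ℝ (Fin n)))
        = fun t : ℝ => f (t • (u - v) + v) := by
      funext t
      simp [Function.comp, AffineMap.lineMap_apply, vsub_eq_sub, vadd_eq_add]
    rwa [he] at h2
  have h1 : HasDerivAt (fun t : ℝ => t • (u - v) + v) (u - v) 0 := by
    simpa using ((hasDerivAt_id (0 : ℝ)).smul_const (u - v)).add_const v
  have hder : HasDerivAt (fun t : ℝ => f (t • (u - v) + v)) (fderiv ℝ f v (u - v)) 0 := by
    have h2 := (hd ((0:ℝ) • (u - v) + v)).hasFDerivAt.comp_hasDerivAt 0 h1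
    rw [zero_smul, zero_add] at h2
    exact h2
  have hs := hφc.le_slope_of_hasDerivAt (Set.mem_univ (0:ℝ)) (Set.mem_univ (1:ℝ)) one_pos hder
  have hsl : slope (fun t : ℝ => f (t • (u - v) + v)) 0 1 = f u - f v := by
    rw [slope_def_field]
    simp
  rw [hsl] at hs
  rw [inner_gradient_eq]
  linarith

lemma proj_vi {K : Set (EuclideanSpace ℝ (Fin n))} (hK : Convex ℝ K)
    {z w : EuclideanSpace ℝ (Fin n)} (hw : w ∈ K)
    (hproj : ∀ y ∈ K, ‖z - w‖ ≤ ‖z - y‖) :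
    ∀ y ∈ K, ⟪z - w, y - w⟫_ℝ ≤ 0 := by
  haveI : Nonempty K := ⟨⟨w, hw⟩⟩
  have hinf : ‖z - w‖ = ⨅ y : K, ‖z - y‖ := le_antisymm
    (le_ciInf fun y => hproj y y.2)
    (ciInf_le ⟨0, by rintro r ⟨y, rfl⟩; exact norm_nonneg _⟩ (⟨w, hw⟩ : K))
  exact (norm_eq_iInf_iff_real_inner_le_zero hK hw).1 hinf

lemma proj_sq_le {K : Set (EuclideanSpace ℝ (Fin n))} (hK : Convex ℝ K)
    {zz w xp : EuclideanSpace ℝ (Fin n)} (hw : w ∈ K) (hxp : xp ∈ K)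
    (hproj : ∀ y ∈ K, ‖zz - xp‖ ≤ ‖zz - y‖) :
    ‖xp - w‖ ^ 2 ≤ ‖zz - w‖ ^ 2 := by
  have hvi := proj_vi hK hxp hproj w hw
  have hexp : ‖zz - w‖ ^ 2 = ‖zz - xp‖^2 - 2*⟪zz - xp, w - xp⟫_ℝ + ‖w - xp‖^2 := by
    have he : zz - w = (zz - xp) - (w - xp) := by abel
    rw [he, norm_sub_sq_real]
  rw [show ‖xp - w‖ = ‖w - xp‖ from norm_sub_rev _ _]
  nlinarith [sq_nonneg ‖zz - xp‖]

lemma adaptP_bounds (f : EuclideanSpace ℝ (Fin n) → ℝ) (Lc : ℝ) (hL : 0 < Lc)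
    (v : EuclideanSpace ℝ (Fin n)) (hfv : 0 < f v) (hG : gradient f v ≠ 0) :
    0 < adaptP f Lc v ∧ ‖gradient f v‖ ^ 2 ≤ 2 * adaptP f Lc v ∧
      adaptP f Lc v ≤ max (‖gradient f v‖ ^ 2) (f v * Lc) := by
  set G := gradient f v with hGdef
  have hGn : 0 < ‖G‖ := norm_pos_iff.mpr hG
  set a : ℝ := ‖G‖ / Lc with ha
  have hapos : 0 < a := div_pos hGn hL
  have hnc : ‖v - ballCenter f Lc v‖ = a := by
    rw [ballCenter, sub_sub_cancel, norm_smul, Real.norm_eq_abs,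
      abs_of_pos (by positivity : (0:ℝ) < 1/Lc), ha]
    ring
  have hR : ballRadius f Lc v = a^2 - 2 * f v / Lc := by
    rw [ballRadius, ha, div_pow]
  have hGLa : ‖G‖ = Lc * a := by rw [ha]; field_simp
  have hmax : max (f v) 0 = f v := max_eq_left hfv.le
  by_cases hRs : ballRadius f Lc v ≤ 0
  · have h0 : max (ballRadius f Lc v) 0 = 0 := max_eq_right hRs
    have hp : adaptP f Lc v = f v * Lc := by
      rw [adaptP, h0, Real.sqrt_zero, zero_div, sub_zero, div_one, hmax]
    rw [hR] at hRs
    have hRle : Lc * a^2 ≤ 2 * f v := by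
      have h1 : a^2 ≤ 2 * f v / Lc := by linarith
      calc Lc * a^2 ≤ Lc * (2 * f v / Lc) := by
            exact mul_le_mul_of_nonneg_left h1 hL.le
        _ = 2 * f v := by field_simp
    refine ⟨by rw [hp]; positivity, ?_, by rw [hp]; exact le_max_right _ _⟩
    rw [hp, hGLa]
    nlinarith
  · push_neg at hRs
    set r : ℝ := Real.sqrt (max (ballRadius f Lc v) 0) with hr
    have hmaxR : max (ballRadius f Lc v) 0 = ballRadius f Lc v := max_eq_left hRs.le
    have hr0 : 0 ≤ r := Real.sqrt_nonneg _
    have hr2 : r^2 = a^2 - 2*f v/Lc := by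
      rw [hr, hmaxR, Real.sq_sqrt hRs.le, hR]
    have hra : r < a := by
      have h1 : r^2 < a^2 := by
        have : 0 < 2 * f v / Lc := by positivity
        rw [hr2]; linarith
      nlinarith
    have hdenpos : 0 < 1 - r / a := by
      have : r / a < 1 := (div_lt_one hapos).mpr hra
      linarith
    have hp : adaptP f Lc v = Lc^2 * a * (a + r) / 2 := by
      rw [adaptP, hmax, hnc, ← hr]
      rw [div_eq_div_iff (ne_of_gt hdenpos) two_ne_zero]
      have hLc : Lc ≠ 0 := ne_of_gt hL
      have hane : a ≠ 0 := ne_of_gt hapos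
      have hr2' : r^2 * Lc = a^2 * Lc - 2 * f v := by
        rw [hr2]; field_simp
      have e : a * (1 - r / a) = a - r := by rw [mul_sub, mul_one, mul_div_cancel₀ r hane]
      linear_combination Lc * hr2' - Lc^2 * (a + r) * e
    refine ⟨by rw [hp]; positivity, ?_, ?_⟩
    · rw [hp, hGLa]; nlinarith
    · have h1 : adaptP f Lc v ≤ ‖G‖^2 := by rw [hp, hGLa]; nlinarith
      exact le_trans h1 (le_max_left _ _)

end Aux

set_option maxHeartbeats 1000000 in
theorem stmt_11 {n : ℕ} {Ω : Type*} [MeasurableSpace Ω]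
    (P : Measure Ω) [IsProbabilityMeasure P]
    (h : EuclideanSpace ℝ (Fin n) → Ω → ℝ)
    (hconv : ∀ ξ, ConvexOn ℝ Set.univ (fun y => h y ξ))
    (hdiff : ∀ ξ, Differentiable ℝ (fun y => h y ξ))
    (L : Ω → ℝ) (Lmax : ℝ) (hLpos : ∀ ξ, 0 < L ξ) (hLmax : ∀ ξ, L ξ ≤ Lmax)
    (hLip : ∀ ξ x y, ‖gradient (fun u => h u ξ) x - gradient (fun u => h u ξ) y‖
        ≤ L ξ * ‖x - y‖)
    (Y : Set (EuclideanSpace ℝ (Fin n)))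
    (hYne : Y.Nonempty) (hYcl : IsClosed Y) (hYcv : Convex ℝ Y)
    (X : Set (EuclideanSpace ℝ (Fin n)))
    (hX : X = {y ∈ Y | ∀ ξ, h y ξ ≤ 0}) (hXne : X.Nonempty)
    (Xstar : Set (EuclideanSpace ℝ (Fin n)))
    (hXsX : Xstar ⊆ X) (hXsne : Xstar.Nonempty)
    (hXscl : IsClosed Xstar) (hXscv : Convex ℝ Xstar)
    -- linear regularity condition
    (c : ℝ) (hc : 0 < c)
    (hreg : ∀ y ∈ Y, (infDist y X) ^ 2 ≤ c * ∫ ξ, (max (h y ξ) 0) ^ 2 ∂P)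
    (β : ℝ) (hβ : β ∈ Set.Ioo (0 : ℝ) 1)
    (x : EuclideanSpace ℝ (Fin n)) (hx : x ∈ Y)
    (g : EuclideanSpace ℝ (Fin n)) (Bf : ℝ) (hBf : 0 ≤ Bf) (hg : ‖g‖ ≤ Bf)
    (α : ℝ) (hα : 0 ≤ α)
    -- `v = Π_Y(x - α g)` : projection of `x - α g` onto `Y`
    (v : EuclideanSpace ℝ (Fin n)) (hvY : v ∈ Y)
    (hvproj : ∀ y ∈ Y, ‖x - α • g - v‖ ≤ ‖x - α • g - y‖)
    -- `vbar = Π_{X*}(v)` : projection of `v` onto `X*`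
    (vbar : EuclideanSpace ℝ (Fin n)) (hvbarmem : vbar ∈ Xstar)
    (hvbarproj : ∀ y ∈ Xstar, ‖v - vbar‖ ≤ ‖v - y‖)
    -- bounds at the point `v`
    (Bh Mh : ℝ) (hBh : 0 < Bh) (hMh : 0 < Mh)
    (hgradbd : ∀ ξ, ‖gradient (fun u => h u ξ) v‖ ≤ Bh)
    (hhbd : ∀ ξ, |h v ξ| ≤ Mh)
    (B2 : ℝ) (hB2 : B2 = max (Bh ^ 2) (Mh * Lmax))
    -- the SMBA feasibility step (division by zero interpreted as zero)
    (z : Ω → EuclideanSpace ℝ (Fin n))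
    (hz : ∀ ξ, z ξ = v - (β * (max (h v ξ) 0 / adaptP (fun u => h u ξ) (L ξ) v))
        • gradient (fun u => h u ξ) v)
    -- `xplus ξ = Π_Y(z ξ)` : projection of `z ξ` onto `Y`
    (xplus : Ω → EuclideanSpace ℝ (Fin n)) (hxpY : ∀ ξ, xplus ξ ∈ Y)
    (hxpproj : ∀ ξ, ∀ y ∈ Y, ‖z ξ - xplus ξ‖ ≤ ‖z ξ - y‖)
    -- measurability assumptions
    (hmeas1 : Measurable fun ξ => (max (h v ξ) 0) ^ 2)
    (hmeas2 : Measurable fun ξ => (infDist (xplus ξ) Xstar) ^ 2) :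
    ∫ ξ, (infDist (xplus ξ) Xstar) ^ 2 ∂P
      ≤ ‖v - vbar‖ ^ 2 - β * (1 - β) / (c * B2) * (infDist x X) ^ 2
        + 2 * β * (1 - β) / (c * B2) * α ^ 2 * Bf ^ 2 := by
  obtain ⟨hβ0, hβ1⟩ := hβ
  have h1β : 0 < 1 - β := by linarith
  have hB2pos : 0 < B2 := by
    rw [hB2]; exact lt_of_lt_of_le (by positivity : (0:ℝ) < Bh^2) (le_max_left _ _)
  set K := 2*β*(1-β)/B2 with hKdef
  have hKpos : 0 < K := by rw [hKdef]; positivity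
  have hXY : X ⊆ Y := by rw [hX]; exact fun y hy => hy.1
  have hvbarX : vbar ∈ X := hXsX hvbarmem
  have hvbarY : vbar ∈ Y := hXY hvbarX
  have hvbarneg : ∀ ξ, h vbar ξ ≤ 0 := by
    rw [hX] at hvbarX; exact hvbarX.2
  -- pointwise key inequality
  have key : ∀ ξ, (infDist (xplus ξ) Xstar)^2 ≤ ‖v - vbar‖^2 - K * (max (h v ξ) 0)^2 := by
    intro ξ
    have hid : infDist (xplus ξ) Xstar ≤ ‖xplus ξ - vbar‖ := by
      simpa [dist_eq_norm] using infDist_le_dist_of_mem (x := xplus ξ) hvbarmem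
    by_cases hpos : h v ξ ≤ 0
    · have hm : max (h v ξ) 0 = 0 := max_eq_right hpos
      have hzv : z ξ = v := by rw [hz ξ, hm]; simp
      have hxpv : xplus ξ = v := by
        have h2 := hxpproj ξ v hvY
        rw [hzv, sub_self, norm_zero] at h2
        have h3 : ‖v - xplus ξ‖ = 0 := le_antisymm h2 (norm_nonneg _)
        exact (sub_eq_zero.mp (norm_eq_zero.mp h3)).symm
      rw [hxpv, hm]
      have h2 : infDist v Xstar ≤ ‖v - vbar‖ := by
        simpa [dist_eq_norm] using infDist_le_dist_of_mem (x := v) hvbarmem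
      have h3 := infDist_nonneg (s := Xstar) (x := v)
      nlinarith
    · push_neg at hpos
      set f : EuclideanSpace ℝ (Fin n) → ℝ := fun u => h u ξ with hf
      set G := gradient f v with hGd
      have hip : h v ξ ≤ ⟪G, v - vbar⟫_ℝ := by
        have h2 := convex_grad_ineq (hconv ξ) (hdiff ξ) v vbar
        have hneg := hvbarneg ξ
        have hflip : ⟪G, vbar - v⟫_ℝ = -⟪G, v - vbar⟫_ℝ := by
          rw [show vbar - v = -(v - vbar) by abel, inner_neg_right]
        have h3 : f v + ⟪G, vbar - v⟫_ℝ ≤ f vbar := h2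
        have h4 : f vbar ≤ 0 := hneg
        have h5 : f v = h v ξ := rfl
        rw [hflip, h5] at h3
        linarith
      have hGne : G ≠ 0 := by
        intro h0
        rw [h0, inner_zero_left] at hip
        linarith
      obtain ⟨hppos, hG2p, hple⟩ := adaptP_bounds f (L ξ) (hLpos ξ) v hpos hGne
      have hpB2 : adaptP f (L ξ) v ≤ B2 := by
        rw [hB2]
        refine le_trans hple (max_le_max ?_ ?_)
        · exact pow_le_pow_left₀ (norm_nonneg _) (hgradbd ξ) 2
        · exact mul_le_mul (le_trans (le_abs_self _) (hhbd ξ)) (hLmax ξ) (hLpos ξ).le hMh.le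
      set p := adaptP f (L ξ) v with hpdef
      have hzz : z ξ = v - (β * (h v ξ / p)) • G := by
        rw [hz ξ, max_eq_left hpos.le]
      set t := β * (h v ξ / p) with ht
      have htnn : 0 ≤ t := by
        rw [ht]; positivity
      have hnorm : ‖z ξ - vbar‖^2 = ‖v - vbar‖^2 - 2*t*⟪G, v - vbar⟫_ℝ + t^2*‖G‖^2 := by
        rw [hzz]
        rw [show v - t • G - vbar = (v - vbar) - t • G by abel]
        rw [norm_sub_sq_real, real_inner_smul_right, real_inner_comm, norm_smul,
          Real.norm_eq_abs, mul_pow, sq_abs]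
        ring
      have hstep : ‖z ξ - vbar‖^2 ≤ ‖v - vbar‖^2 - 2*β*(1-β)*((h v ξ)^2/p) := by
        rw [hnorm]
        have h1 : t^2 * ‖G‖^2 ≤ 2*β^2*((h v ξ)^2/p) := by
          have h2 : t^2*‖G‖^2 ≤ t^2*(2*p) := mul_le_mul_of_nonneg_left hG2p (sq_nonneg t)
          have h3 : t^2*(2*p) = 2*β^2*((h v ξ)^2/p) := by
            rw [ht]; field_simp; try ring
          linarith
        have h4 : 2*β*((h v ξ)^2/p) ≤ 2*t*⟪G, v - vbar⟫_ℝ := by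
          have h5 : (2*t)*(h v ξ) ≤ (2*t)*⟪G, v - vbar⟫_ℝ :=
            mul_le_mul_of_nonneg_left hip (by linarith)
          have h6 : (2*t)*(h v ξ) = 2*β*((h v ξ)^2/p) := by
            rw [ht]; field_simp; try ring
          linarith
        have h7 : 2*β*((h v ξ)^2/p) - 2*β^2*((h v ξ)^2/p) = 2*β*(1-β)*((h v ξ)^2/p) := by
          ring
        linarith
      have hfrac : (h v ξ)^2/B2 ≤ (h v ξ)^2/p := by
        gcongr
      have hKq : K * (max (h v ξ) 0)^2 = 2*β*(1-β)*((h v ξ)^2/B2) := by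
        rw [max_eq_left hpos.le, hKdef]
        field_simp
        try ring
      have hxb : ‖xplus ξ - vbar‖^2 ≤ ‖z ξ - vbar‖^2 :=
        proj_sq_le hYcv hvbarY (hxpY ξ) (hxpproj ξ)
      have hb : 0 ≤ 2*β*(1-β) := by positivity
      calc (infDist (xplus ξ) Xstar)^2 ≤ ‖xplus ξ - vbar‖^2 :=
            pow_le_pow_left₀ infDist_nonneg hid 2
        _ ≤ ‖z ξ - vbar‖^2 := hxb
        _ ≤ ‖v - vbar‖^2 - 2*β*(1-β)*((h v ξ)^2/p) := hstep
        _ ≤ ‖v - vbar‖^2 - K*(max (h v ξ) 0)^2 := by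
            rw [hKq]
            have := mul_le_mul_of_nonneg_left hfrac hb
            linarith
  -- integrability and integration
  have hbdd1 : ∀ ξ, (infDist (xplus ξ) Xstar)^2 ≤ ‖v - vbar‖^2 := by
    intro ξ
    have h1 := key ξ
    nlinarith [sq_nonneg (max (h v ξ) 0)]
  have hint1 : Integrable (fun ξ => (infDist (xplus ξ) Xstar)^2) P := by
    apply Integrable.mono' (integrable_const (‖v - vbar‖^2)) hmeas2.aestronglyMeasurable
    refine Filter.Eventually.of_forall fun ξ => ?_
    rw [Real.norm_of_nonneg (sq_nonneg _)]
    exact hbdd1 ξ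
  have hint2 : Integrable (fun ξ => (max (h v ξ) 0)^2) P := by
    apply Integrable.mono' (integrable_const (Mh^2)) hmeas1.aestronglyMeasurable
    refine Filter.Eventually.of_forall fun ξ => ?_
    rw [Real.norm_of_nonneg (sq_nonneg _)]
    have h1 : max (h v ξ) 0 ≤ Mh := max_le (le_trans (le_abs_self _) (hhbd ξ)) hMh.le
    have h2 : (0:ℝ) ≤ max (h v ξ) 0 := le_max_right _ _
    nlinarith
  have hmono : ∫ ξ, (infDist (xplus ξ) Xstar)^2 ∂P
      ≤ ∫ ξ, (‖v - vbar‖^2 - K*(max (h v ξ) 0)^2) ∂P :=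
    integral_mono hint1 ((integrable_const _).sub (hint2.const_mul K)) key
  have heq : ∫ ξ, (‖v - vbar‖^2 - K*(max (h v ξ) 0)^2) ∂P
      = ‖v - vbar‖^2 - K * ∫ ξ, (max (h v ξ) 0)^2 ∂P := by
    rw [integral_sub (integrable_const _) (hint2.const_mul K), integral_const,
      integral_const_mul]
    simp
  set I := ∫ ξ, (max (h v ξ) 0)^2 ∂P with hI
  have hIge : (infDist v X)^2 / c ≤ I := by
    rw [div_le_iff₀ hc]
    have := hreg v hvY
    linarith
  -- ‖x - v‖ ≤ α * Bf
  have hxv : ‖x - v‖ ≤ α * Bf := by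
    have hvi := proj_vi hYcv hvY hvproj x hx
    have hexp : ⟪x - α • g - v, x - v⟫_ℝ = ‖x - v‖^2 - α * ⟪g, x - v⟫_ℝ := by
      rw [show x - α • g - v = (x - v) - α • g by abel]
      rw [inner_sub_left, real_inner_self_eq_norm_sq, real_inner_smul_left]
    have h3 := real_inner_le_norm g (x - v)
    have h2 : ‖x - v‖^2 ≤ α * (‖g‖ * ‖x - v‖) := by
      have h4 : α * ⟪g, x - v⟫_ℝ ≤ α * (‖g‖ * ‖x - v‖) := mul_le_mul_of_nonneg_left h3 hα
      nlinarith [hvi]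
    rcases eq_or_lt_of_le (norm_nonneg (x - v)) with h0 | h0
    · rw [← h0]; positivity
    · have h5 : ‖x - v‖ * ‖x - v‖ ≤ (α * Bf) * ‖x - v‖ := by
        have h6 : α * (‖g‖ * ‖x - v‖) ≤ α * (Bf * ‖x - v‖) :=
          mul_le_mul_of_nonneg_left (mul_le_mul_of_nonneg_right hg (norm_nonneg _)) hα
        nlinarith
      exact le_of_mul_le_mul_right h5 h0
  have hdx : infDist x X ≤ infDist v X + α * Bf := by
    have h1 := infDist_le_infDist_add_dist (x := x) (y := v) (s := X)
    rw [dist_eq_norm] at h1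
    linarith
  have hdxnn : 0 ≤ infDist x X := infDist_nonneg
  have hdvnn : 0 ≤ infDist v X := infDist_nonneg
  have hdx2 : (infDist x X)^2 ≤ 2*(infDist v X)^2 + 2*(α^2*Bf^2) := by
    have h1 : (infDist x X)^2 ≤ (infDist v X + α*Bf)^2 := by
      have := pow_le_pow_left₀ hdxnn hdx 2
      simpa using this
    nlinarith [sq_nonneg (infDist v X - α*Bf)]
  have hA : K * ((infDist v X)^2/c) ≤ K * I := mul_le_mul_of_nonneg_left hIge hKpos.le
  set γ := β * (1 - β) / (c * B2) with hγ
  have hγpos : 0 < γ := by rw [hγ]; positivity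
  have e2 : 2 * β * (1 - β) / (c * B2) = 2 * γ := by rw [hγ]; ring
  have hKc : K * ((infDist v X)^2/c) = 2*γ*(infDist v X)^2 := by
    rw [hKdef, hγ]
    field_simp
  rw [e2]
  have hmul := mul_le_mul_of_nonneg_left hdx2 hγpos.le
  calc ∫ ξ, (infDist (xplus ξ) Xstar)^2 ∂P ≤ ‖v - vbar‖^2 - K*I := by
        rw [← heq]; exact hmono
    _ ≤ ‖v - vbar‖^2 - γ * (infDist x X)^2 + 2*γ*α^2*Bf^2 := by nlinarith
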